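/- Every nonzero ideal of the Lie algebra m·d/dx of polynomial vector fields on the affine line vanishing at 0 contains m^{N+1}·d/dx for some N; consequently, every finite-dimensional representation of m·d/dx is annihilated by m^{N+1}·d/dx for some N. -/

import Mathlib

open Polynomial

variable (K : Type*) [Field K] [CharZero K]

private lemma span_X_stable (d : Derivation K (Polynomial K) (Polynomial K))
    (hd : d X ∈ Ideal.span {(X : Polynomial K)}) :
    ∀ f ∈ Ideal.span {(X : Polynomial K)}, d f ∈ Ideal.span {(X : Polynomial K)} := by
  intro f hf
  rw [Ideal.mem_span_singleton] at hf
  obtain ⟨g, rfl⟩ := hf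
  rw [Derivation.leibniz, smul_eq_mul, smul_eq_mul]
  exact add_mem (Ideal.mul_mem_right _ _ (Ideal.mem_span_singleton_self _))
    (Ideal.mul_mem_left _ _ hd)

/-- The Lie algebra `m·d/dx` of polynomial vector fields on the affine line
vanishing at the origin: derivations `d` of `K[x]` with `d(x) ∈ (x)`. -/
noncomputable def mVLie : LieSubalgebra K (Derivation K (Polynomial K) (Polynomial K)) where
  carrier := {d | d X ∈ Ideal.span {(X : Polynomial K)}}
  add_mem' := by intro d e hd he; simpa using add_mem hd he
  smul_mem' := by
    intro c d hd
    simpa using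
      Submodule.smul_mem ((Ideal.span {(X : Polynomial K)}).restrictScalars K) c hd
  zero_mem' := by
    simp only [Set.mem_setOf_eq, Derivation.coe_zero, Pi.zero_apply]
    exact Submodule.zero_mem _
  lie_mem' := by
    intro d e hd he
    rw [Set.mem_setOf_eq, Derivation.commutator_apply]
    exact sub_mem (span_X_stable K d hd _ he) (span_X_stable K e he _ hd)

set_option linter.unusedSectionVars false

lemma mem_mVLie (d : Derivation K (Polynomial K) (Polynomial K)) :
    d ∈ mVLie K ↔ d X ∈ Ideal.span {(X : Polynomial K)} := Iff.rfl

lemma mV_coe_smul (c : K) (d : mVLie K) :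
    ((c • d : mVLie K) : Derivation K (Polynomial K) (Polynomial K))
      = c • (d : Derivation K (Polynomial K) (Polynomial K)) := rfl

lemma mV_coe_sub (d e : mVLie K) :
    ((d - e : mVLie K) : Derivation K (Polynomial K) (Polynomial K))
      = (d : Derivation K (Polynomial K) (Polynomial K)) - e := rfl

lemma mV_eq_zero_iff (d : mVLie K) :
    d = 0 ↔ (d : Derivation K (Polynomial K) (Polynomial K)) X = 0 := by
  constructor
  · rintro rfl; rfl
  · intro h
    apply Subtype.ext
    apply Polynomial.derivation_ext
    simpa using h

noncomputable def toL (g : Polynomial K) : mVLie K :=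
  ⟨Polynomial.mkDerivation K (X * g), by
    rw [mem_mVLie, Polynomial.mkDerivation_X]
    exact Ideal.mem_span_singleton.2 (Dvd.intro g rfl)⟩

@[simp] lemma toL_coe_X (g : Polynomial K) :
    ((toL K g : mVLie K) : Derivation K (Polynomial K) (Polynomial K)) X = X * g :=
  Polynomial.mkDerivation_X _ _

lemma toL_eq (d : mVLie K) (g : Polynomial K)
    (h : (d : Derivation K (Polynomial K) (Polynomial K)) X = X * g) : d = toL K g := by
  apply Subtype.ext
  apply Polynomial.derivation_ext
  rw [h, toL_coe_X]

lemma toL_add (p q : Polynomial K) : toL K (p + q) = toL K p + toL K q := by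
  apply Subtype.ext
  show Polynomial.mkDerivation K (X * (p + q)) = _
  rw [mul_add, map_add]
  rfl

lemma toL_smul (c : K) (p : Polynomial K) : toL K (c • p) = c • toL K p := by
  apply Subtype.ext
  show Polynomial.mkDerivation K (X * (c • p)) = _
  rw [mV_coe_smul]
  show _ = c • Polynomial.mkDerivation K (X * p)
  rw [mul_smul_comm, map_smul]

noncomputable def Ek (k : ℕ) : mVLie K := toL K (X ^ k)

lemma Ek_coe (k : ℕ) :
    ((Ek K k : mVLie K) : Derivation K (Polynomial K) (Polynomial K))
      = Polynomial.mkDerivation K (X ^ (k + 1)) := by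
  apply Polynomial.derivation_ext
  simp only [Ek, toL_coe_X, Polynomial.mkDerivation_X, ← pow_succ']

lemma Ek_coe_X (k : ℕ) :
    ((Ek K k : mVLie K) : Derivation K (Polynomial K) (Polynomial K)) X = X ^ (k + 1) := by
  rw [Ek_coe, Polynomial.mkDerivation_X]

lemma Ek_ne_zero (k : ℕ) : Ek K k ≠ 0 := by
  rw [Ne, mV_eq_zero_iff, Ek_coe_X]
  exact pow_ne_zero _ X_ne_zero

lemma mkd_pow_apply (a b : ℕ) :
    Polynomial.mkDerivation K ((X : Polynomial K) ^ (a + 1)) ((X : Polynomial K) ^ (b + 1))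
      = C ((b : K) + 1) * X ^ (a + b + 1) := by
  rw [Polynomial.mkDerivation_apply, derivative_X_pow, smul_eq_mul]
  push_cast [Nat.add_sub_cancel]
  ring

lemma lie_Ek (m n : ℕ) :
    ⁅Ek K m, Ek K n⁆ = ((n : K) - (m : K)) • Ek K (m + n) := by
  apply Subtype.ext
  rw [LieSubalgebra.coe_bracket, mV_coe_smul]
  apply Polynomial.derivation_ext
  rw [Derivation.commutator_apply, Derivation.smul_apply, Ek_coe_X, Ek_coe_X, Ek_coe, Ek_coe,
    Ek_coe_X, mkd_pow_apply, mkd_pow_apply, Polynomial.smul_eq_C_mul]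
  simp only [map_sub, map_add, map_one, map_natCast]
  ring

/-- Step A: a nonzero element of an ideal produces some `Ek` in the ideal. -/
lemma exists_Ek_mem (I : LieIdeal K (mVLie K)) :
    ∀ (m : ℕ) (d : mVLie K), d ∈ I → d ≠ 0 →
      ((d : Derivation K (Polynomial K) (Polynomial K)) X).natDegree ≤ m →
      ∃ n, Ek K n ∈ I := by
  intro m
  induction m with
  | zero =>
    intro d hd hne hdeg
    exfalso
    set f := (d : Derivation K (Polynomial K) (Polynomial K)) X with hf
    have hf0 : f ≠ 0 := by rwa [Ne, ← mV_eq_zero_iff]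
    have hc0 : f.coeff 0 = 0 :=
      Polynomial.X_dvd_iff.1 (Ideal.mem_span_singleton.1 d.2)
    interval_cases h : f.natDegree
    · exact hf0 (by rw [Polynomial.eq_C_of_natDegree_eq_zero h, hc0, map_zero])
  | succ m ih =>
    intro d hd hne hdeg
    set f := (d : Derivation K (Polynomial K) (Polynomial K)) X with hf
    have hf0 : f ≠ 0 := by rwa [Ne, ← mV_eq_zero_iff]
    have hc0 : f.coeff 0 = 0 :=
      Polynomial.X_dvd_iff.1 (Ideal.mem_span_singleton.1 d.2)
    set n := f.natDegree with hn
    have hn1 : 1 ≤ n := by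
      by_contra h
      push_neg at h
      interval_cases h2 : n
      · exact hf0 (by rw [Polynomial.eq_C_of_natDegree_eq_zero h2, hc0, map_zero])
    set d' : mVLie K := ⁅Ek K 0, d⁆ - ((n : K) - 1) • d with hd'
    have hd'I : d' ∈ I := I.sub_mem (I.lie_mem hd) (I.smul_mem _ hd)
    have hcoeff : ∀ i : ℕ,
        ((d' : Derivation K (Polynomial K) (Polynomial K)) X).coeff i
          = ((i : K) - (n : K)) * f.coeff i := by
      intro i
      have hX : (d' : Derivation K (Polynomial K) (Polynomial K)) X
          = derivative f * X - f - ((n : K) - 1) • f := by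
        rw [hd', mV_coe_sub, mV_coe_smul, Derivation.sub_apply, Derivation.smul_apply,
          LieSubalgebra.coe_bracket, Derivation.commutator_apply, Ek_coe, ← hf,
          Polynomial.mkDerivation_X, pow_one, ← hf, Polynomial.mkDerivation_apply, smul_eq_mul]
      rw [hX]
      simp only [Polynomial.coeff_sub, Polynomial.coeff_smul, smul_eq_mul]
      cases i with
      | zero => simp [hc0]
      | succ j =>
        rw [Polynomial.coeff_mul_X, Polynomial.coeff_derivative]
        push_cast
        ring
    by_cases hzero : d' = 0
    · -- f is a monomial; Ek (n-1) ∈ I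
      have hfi : ∀ i : ℕ, i ≠ n → f.coeff i = 0 := by
        intro i hi
        have h0 : ((i : K) - (n : K)) * f.coeff i = 0 := by
          rw [← hcoeff i, hzero]; simp
        have : ((i : K) - (n : K)) ≠ 0 := sub_ne_zero.2 (by exact_mod_cast hi)
        exact (mul_eq_zero.1 h0).resolve_left this
      have hfC : f = C (f.coeff n) * X ^ n := by
        ext i
        rw [Polynomial.coeff_C_mul, Polynomial.coeff_X_pow]
        by_cases h : i = n
        · simp [h]
        · simp [h, hfi i h]
      have hcne : f.coeff n ≠ 0 := by
        rw [hn]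
        exact mt Polynomial.leadingCoeff_eq_zero.1 hf0
      have hdE : d = f.coeff n • Ek K (n - 1) := by
        apply Subtype.ext
        apply Polynomial.derivation_ext
        rw [← hf, mV_coe_smul, Derivation.smul_apply, Ek_coe_X,
          Nat.sub_add_cancel hn1, hfC, Polynomial.smul_eq_C_mul]
        simp [Polynomial.coeff_C_mul, Polynomial.coeff_X_pow]
      refine ⟨n - 1, ?_⟩
      have : Ek K (n - 1) = (f.coeff n)⁻¹ • d := by
        rw [hdE, smul_smul, inv_mul_cancel₀ hcne, one_smul]
      rw [this]
      exact I.smul_mem _ hd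
    · -- degree drops
      have hdlt : ((d' : Derivation K (Polynomial K) (Polynomial K)) X).natDegree ≤ m := by
        have hzc : ∀ i, n ≤ i →
            ((d' : Derivation K (Polynomial K) (Polynomial K)) X).coeff i = 0 := by
          intro i hi
          rcases eq_or_lt_of_le hi with h | h
          · rw [hcoeff, ← h, sub_self, zero_mul]
          · rw [hcoeff, Polynomial.coeff_eq_zero_of_natDegree_lt h, mul_zero]
        have : ((d' : Derivation K (Polynomial K) (Polynomial K)) X).natDegree < n := by
          have hne' : (d' : Derivation K (Polynomial K) (Polynomial K)) X ≠ 0 := by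
            rwa [Ne, ← mV_eq_zero_iff]
          rw [Polynomial.natDegree_lt_iff_degree_lt hne']
          exact Polynomial.degree_lt_iff_coeff_zero _ _ |>.2
            (fun i hi => hzc i (by exact_mod_cast hi))
        omega
      exact ih d' hd'I hzero hdlt

/-- Step B -/
lemma Ek_mem_ge (I : LieIdeal K (mVLie K)) (n : ℕ) (h : Ek K n ∈ I) :
    ∀ k, 2 * n + 1 ≤ k → Ek K k ∈ I := by
  intro k hk
  have hc : (n : K) - ((k - n : ℕ) : K) ≠ 0 := by
    rw [sub_ne_zero]
    exact_mod_cast (by omega : n ≠ k - n)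
  have hb : ⁅Ek K (k - n), Ek K n⁆ = ((n : K) - ((k - n : ℕ) : K)) • Ek K k := by
    rw [lie_Ek, Nat.sub_add_cancel (by omega : n ≤ k)]
  have : Ek K k = ((n : K) - ((k - n : ℕ) : K))⁻¹ • ⁅Ek K (k - n), Ek K n⁆ := by
    rw [hb, smul_smul, inv_mul_cancel₀ hc, one_smul]
  rw [this]
  exact I.smul_mem _ (I.lie_mem h)

/-- Step C -/
lemma mem_of_val_mem_pow (I : LieIdeal K (mVLie K)) (N : ℕ)
    (hE : ∀ k, N ≤ k → Ek K k ∈ I) (d : mVLie K)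
    (hd : (d : Derivation K (Polynomial K) (Polynomial K)) X
        ∈ Ideal.span {(X : Polynomial K)} ^ (N + 1)) : d ∈ I := by
  rw [Ideal.span_singleton_pow, Ideal.mem_span_singleton] at hd
  obtain ⟨g, hg⟩ := hd
  have key : ∀ g : Polynomial K, toL K (X ^ N * g) ∈ I := by
    intro g
    induction g using Polynomial.induction_on' with
    | add p q hp hq => rw [mul_add, toL_add]; exact I.add_mem hp hq
    | monomial j a =>
      have hmono : (X : Polynomial K) ^ N * monomial j a = a • X ^ (N + j) := by
        rw [← Polynomial.C_mul_X_pow_eq_monomial, Polynomial.smul_eq_C_mul, pow_add]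
        ring
      rw [hmono, toL_smul]
      exact I.smul_mem _ (hE (N + j) (Nat.le_add_right _ _))
  have hdg : d = toL K (X ^ N * g) := by
    apply toL_eq
    rw [hg, pow_succ']
    ring
  rw [hdg]
  exact key g

attribute [local instance] LieRing.ofAssociativeRing

/-- Every nonzero ideal of `m·d/dx` contains `m^{N+1}·d/dx` for some `N`;
consequently every finite-dimensional representation `W` of `m·d/dx` is
annihilated by `m^{N+1}·d/dx` for some `N`. -/
theorem mV_ideals_and_findim_reps
    (W : Type*) [AddCommGroup W] [Module K W]
    [LieRingModule (mVLie K) W] [LieModule K (mVLie K) W] [FiniteDimensional K W] :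
    (∀ I : LieIdeal K (mVLie K), I ≠ ⊥ →
      ∃ N : ℕ, ∀ d : mVLie K,
        (d : Derivation K (Polynomial K) (Polynomial K)) X
            ∈ (Ideal.span {(X : Polynomial K)}) ^ (N + 1) →
        d ∈ I) ∧
    (∃ N : ℕ, ∀ d : mVLie K,
      (d : Derivation K (Polynomial K) (Polynomial K)) X
          ∈ (Ideal.span {(X : Polynomial K)}) ^ (N + 1) →
      ∀ w : W, ⁅d, w⁆ = 0) := by
  have part1 : ∀ I : LieIdeal K (mVLie K), I ≠ ⊥ →
      ∃ N : ℕ, ∀ d : mVLie K,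
        (d : Derivation K (Polynomial K) (Polynomial K)) X
            ∈ (Ideal.span {(X : Polynomial K)}) ^ (N + 1) →
        d ∈ I := by
    intro I hI
    have : ∃ d ∈ I, d ≠ (0 : mVLie K) := by
      by_contra h
      push_neg at h
      exact hI (LieSubmodule.eq_bot_iff _ |>.2 h)
    obtain ⟨d, hd, hne⟩ := this
    obtain ⟨n, hn⟩ := exists_Ek_mem K I
      ((d : Derivation K (Polynomial K) (Polynomial K)) X).natDegree d hd hne le_rfl
    exact ⟨2 * n + 1, fun e he =>
      mem_of_val_mem_pow K I (2 * n + 1) (fun k hk => Ek_mem_ge K I n hn k hk) e he⟩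
  refine ⟨part1, ?_⟩
  set ρ := LieModule.toEnd K (mVLie K) W with hρ
  have heig : ∀ n : ℕ, ρ (Ek K n) ≠ 0 →
      Module.End.HasEigenvalue ((LieAlgebra.ad K (Module.End K W)) (ρ (Ek K 0))) (n : K) := by
    intro n h
    apply Module.End.hasEigenvalue_of_hasEigenvector (x := ρ (Ek K n))
    refine ⟨Module.End.mem_eigenspace_iff.2 ?_, h⟩
    rw [LieAlgebra.ad_apply, ← LieHom.map_lie, lie_Ek]
    simp [map_smul]
  have hfin : {n : ℕ | ρ (Ek K n) ≠ 0}.Finite := by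
    apply Set.Finite.subset
      (Set.Finite.preimage (Nat.cast_injective.injOn)
        (Module.End.finite_hasEigenvalue ((LieAlgebra.ad K (Module.End K W)) (ρ (Ek K 0)))))
    intro n hn
    exact heig n hn
  obtain ⟨n, hn⟩ := (hfin.infinite_compl).nonempty
  have hn0 : ρ (Ek K n) = 0 := by
    by_contra h
    exact hn h
  have hker : (ρ.ker : LieIdeal K (mVLie K)) ≠ ⊥ := by
    intro h
    have : Ek K n ∈ ρ.ker := LieHom.mem_ker.2 hn0
    rw [h] at this
    exact Ek_ne_zero K n ((LieSubmodule.mem_bot _).1 this)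
  obtain ⟨N, hN⟩ := part1 ρ.ker hker
  refine ⟨N, fun d hd w => ?_⟩
  have hdk := hN d hd
  rw [LieHom.mem_ker] at hdk
  have : ⁅d, w⁆ = ρ d w := rfl
  rw [this, hdk]
  rfl
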